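/- Let φ₁ : ℝᵖ → ℝ be differentiable with L-Lipschitz gradient, φ₂ proper lsc, 0 < γ < 1/L, u = prox_{γφ₁}(s), v ∈ prox_{γφ₂}(2u−s). Then φ^γ_DR(s) = φ₁(u) + φ₂(v) + (1/γ)⟨s−u, v−u⟩ + (1/(2γ))‖v−u‖² equals the minimum over w ∈ ℝᵖ of φ₁(u) + φ₂(w) + ⟨∇φ₁(u), w−u⟩ + (1/(2γ))‖w−u‖², and this minimum is attained at w = v. -/

import Mathlib

open scoped RealInnerProductSpace
open Filter Topology

/-- The convex (Fenchel) conjugate of an extended-real-valued function. -/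
noncomputable def eConj {n : ℕ} (h : EuclideanSpace ℝ (Fin n) → EReal)
    (y : EuclideanSpace ℝ (Fin n)) : EReal :=
  ⨆ x, ((⟪y, x⟫ : ℝ) : EReal) - h x

/-- `h` is proper: nowhere `⊥` and not identically `⊤`. -/
def ProperFn {n : ℕ} (h : EuclideanSpace ℝ (Fin n) → EReal) : Prop :=
  (∃ x, h x ≠ ⊤) ∧ ∀ x, h x ≠ ⊥

/-- Convexity for extended-real-valued functions. -/
def EConvexOn {n : ℕ} (h : EuclideanSpace ℝ (Fin n) → EReal) : Prop :=
  ∀ x y : EuclideanSpace ℝ (Fin n), ∀ a b : ℝ, 0 ≤ a → 0 ≤ b → a + b = 1 →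
    h (a • x + b • y) ≤ (a : EReal) * h x + (b : EReal) * h y

/-- `u ∈ prox_{γ h}(x)` for an extended-real-valued `h`. -/
def IsProx {n : ℕ} (h : EuclideanSpace ℝ (Fin n) → EReal) (γ : ℝ)
    (x u : EuclideanSpace ℝ (Fin n)) : Prop :=
  ∀ w, h u + ((‖u - x‖ ^ 2 / (2 * γ) : ℝ) : EReal) ≤ h w + ((‖w - x‖ ^ 2 / (2 * γ) : ℝ) : EReal)

/-- `u = prox_{γ h}(x)` for a real-valued `h`. -/
def IsProxR {n : ℕ} (h : EuclideanSpace ℝ (Fin n) → ℝ) (γ : ℝ)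
    (x u : EuclideanSpace ℝ (Fin n)) : Prop :=
  ∀ w, h u + ‖u - x‖ ^ 2 / (2 * γ) ≤ h w + ‖w - x‖ ^ 2 / (2 * γ)

/-- The Moreau envelope `h^γ`. -/
noncomputable def moreauEnv {n : ℕ} (h : EuclideanSpace ℝ (Fin n) → EReal) (γ : ℝ)
    (x : EuclideanSpace ℝ (Fin n)) : EReal :=
  ⨅ w, h w + ((‖w - x‖ ^ 2 / (2 * γ) : ℝ) : EReal)

/-- The Douglas–Rachford envelope value at `s`, given the prox points `u, v`. -/
noncomputable def dre {n : ℕ} (φ₁ φ₂ : EuclideanSpace ℝ (Fin n) → EReal) (γ : ℝ)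
    (s u v : EuclideanSpace ℝ (Fin n)) : EReal :=
  φ₁ u + φ₂ v + (((1 / γ) * ⟪s - u, v - u⟫ + ‖v - u‖ ^ 2 / (2 * γ) : ℝ) : EReal)

/-- `v` belongs to the regular (Fréchet) subdifferential of `h` at `x̄`. -/
def RegSubdiffAt {n : ℕ} (h : EuclideanSpace ℝ (Fin n) → EReal)
    (xbar v : EuclideanSpace ℝ (Fin n)) : Prop :=
  ∀ ε : ℝ, 0 < ε → ∀ᶠ x in nhds xbar,
    h xbar + ((⟪v, x - xbar⟫ - ε * ‖x - xbar‖ : ℝ) : EReal) ≤ h x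

/-- `μ`-strong convexity for extended-real-valued functions. -/
def EStrongConvexOn {n : ℕ} (μ : ℝ) (h : EuclideanSpace ℝ (Fin n) → EReal) : Prop :=
  EConvexOn (fun x => h x - ((μ / 2 * ‖x‖ ^ 2 : ℝ) : EReal))

theorem grad_aux {n : ℕ} (γ : ℝ) (s u : EuclideanSpace ℝ (Fin n)) :
    HasGradientAt (fun w => ‖w - s‖ ^ 2 / (2 * γ)) (γ⁻¹ • (u - s)) u := by
  rw [hasGradientAt_iff_hasFDerivAt]
  have h1 : HasFDerivAt (fun w : EuclideanSpace ℝ (Fin n) => (⟪w - s, w - s⟫ : ℝ))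
      ((fderivInnerCLM ℝ (u - s, u - s)).comp
        ((ContinuousLinearMap.id ℝ _).prod (ContinuousLinearMap.id ℝ _))) u :=
    HasFDerivAt.inner ℝ ((hasFDerivAt_id u).sub_const s) ((hasFDerivAt_id u).sub_const s)
  have h2 := h1.const_smul ((2*γ)⁻¹)
  have heq : (fun w : EuclideanSpace ℝ (Fin n) => (2*γ)⁻¹ • (⟪w - s, w - s⟫ : ℝ))
      = fun w => ‖w - s‖ ^ 2 / (2 * γ) := by
    funext w
    rw [real_inner_self_eq_norm_sq, smul_eq_mul]
    ring
  rw [show ((2*γ)⁻¹ • fun w : EuclideanSpace ℝ (Fin n) => (⟪w - s, w - s⟫ : ℝ)) = fun w => (2*γ)⁻¹ • (⟪w - s, w - s⟫ : ℝ) from rfl, heq] at h2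
  refine h2.congr_fderiv (Eq.symm ?_)
  ext w
  simp only [ContinuousLinearMap.coe_comp', Function.comp_apply,
    ContinuousLinearMap.prod_apply, ContinuousLinearMap.coe_id', id_eq,
    fderivInnerCLM_apply, ContinuousLinearMap.coe_smul', Pi.smul_apply, smul_eq_mul]
  rw [InnerProductSpace.toDual_apply_apply, real_inner_smul_left, real_inner_comm w (u - s)]
  ring

theorem gradu_aux {n : ℕ} (φ₁ : EuclideanSpace ℝ (Fin n) → ℝ)
    (f' : EuclideanSpace ℝ (Fin n) → EuclideanSpace ℝ (Fin n))
    (hdiff : ∀ x, HasGradientAt φ₁ (f' x) x)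
    (γ : ℝ) (s u : EuclideanSpace ℝ (Fin n))
    (hu : IsProxR φ₁ γ s u) : f' u = γ⁻¹ • (s - u) := by
  have hg : HasGradientAt (fun w => φ₁ w + ‖w - s‖ ^ 2 / (2 * γ))
      (f' u + γ⁻¹ • (u - s)) u := by
    rw [hasGradientAt_iff_hasFDerivAt] at *
    have := ((hdiff u)).add ((grad_aux γ s u).hasFDerivAt)
    refine HasFDerivAt.congr_fderiv this ?_
    rw [map_add]
  have hmin : IsLocalMin (fun w => φ₁ w + ‖w - s‖ ^ 2 / (2 * γ)) u :=
    Filter.Eventually.of_forall hu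
  have h0 := hmin.hasFDerivAt_eq_zero hg.hasFDerivAt
  have h0' : f' u + γ⁻¹ • (u - s) = 0 := by
    have := congrArg (fun L => (InnerProductSpace.toDual ℝ _).symm L) h0
    simpa using this
  have : f' u = -(γ⁻¹ • (u - s)) := eq_neg_of_add_eq_zero_left h0'
  rw [this, ← smul_neg, neg_sub]


/-- The DRE equals the minimum of the forward-backward model
`w ↦ φ₁(u) + φ₂(w) + ⟪∇φ₁(u), w−u⟫ + ‖w−u‖²/(2γ)`, attained at `w = v`. -/
theorem dre_eq_fbe_min {n : ℕ} (φ₁ : EuclideanSpace ℝ (Fin n) → ℝ)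
    (f' : EuclideanSpace ℝ (Fin n) → EuclideanSpace ℝ (Fin n)) (L : ℝ) (hL : 0 < L)
    (hdiff : ∀ x, HasGradientAt φ₁ (f' x) x)
    (hlip : ∀ x y, ‖f' x - f' y‖ ≤ L * ‖x - y‖)
    (φ₂ : EuclideanSpace ℝ (Fin n) → EReal)
    (h2p : ProperFn φ₂) (h2l : LowerSemicontinuous φ₂)
    (γ : ℝ) (hγ0 : 0 < γ) (hγ : γ < 1 / L)
    (s u v : EuclideanSpace ℝ (Fin n))
    (hu : IsProxR φ₁ γ s u) (hv : IsProx φ₂ γ ((2 : ℝ) • u - s) v) :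
    (∀ w, dre (fun x => ((φ₁ x : ℝ) : EReal)) φ₂ γ s u v
        ≤ ((φ₁ u : ℝ) : EReal) + φ₂ w + ((⟪f' u, w - u⟫ + ‖w - u‖ ^ 2 / (2 * γ) : ℝ) : EReal)) ∧
      dre (fun x => ((φ₁ x : ℝ) : EReal)) φ₂ γ s u v
        = ((φ₁ u : ℝ) : EReal) + φ₂ v + ((⟪f' u, v - u⟫ + ‖v - u‖ ^ 2 / (2 * γ) : ℝ) : EReal) := by
  have hfu : f' u = γ⁻¹ • (s - u) := gradu_aux φ₁ f' hdiff γ s u hu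
  have hinner : ∀ x : EuclideanSpace ℝ (Fin n),
      (⟪f' u, x - u⟫ : ℝ) = (1 / γ) * ⟪s - u, x - u⟫ := by
    intro x
    rw [hfu, real_inner_smul_left, one_div]
  have hexp : ∀ x : EuclideanSpace ℝ (Fin n),
      ‖x - ((2:ℝ) • u - s)‖ ^ 2 / (2 * γ)
        = ((1 / γ) * ⟪s - u, x - u⟫ + ‖x - u‖ ^ 2 / (2 * γ)) + ‖s - u‖ ^ 2 / (2 * γ) := by
    intro x
    have h : x - ((2:ℝ) • u - s) = (x - u) + (s - u) := by
      rw [two_smul]; abel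
    rw [h, norm_add_sq_real, real_inner_comm (x - u) (s - u)]
    field_simp
    ring
  have key : ∀ w, φ₂ v + (((1 / γ) * ⟪s - u, v - u⟫ + ‖v - u‖ ^ 2 / (2 * γ) : ℝ) : EReal)
      ≤ φ₂ w + (((1 / γ) * ⟪s - u, w - u⟫ + ‖w - u‖ ^ 2 / (2 * γ) : ℝ) : EReal) := by
    intro w
    have h := hv w
    have e : ∀ (x : EReal) (a c : ℝ), x + ((a + c : ℝ) : EReal) = (x + (a : EReal)) + (c : EReal) := by
      intro x a c; rw [EReal.coe_add, add_assoc]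
    rw [hexp v, hexp w, e (φ₂ v), e (φ₂ w)] at h
    exact (EReal.addLECancellable_coe (‖s - u‖ ^ 2 / (2 * γ))).add_le_add_iff_right.mp h
  constructor
  · intro w
    rw [dre, hinner w, add_assoc, add_assoc]
    exact add_le_add le_rfl (key w)
  · rw [dre, hinner v]
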